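/- Let A, A₀ be n×n symmetric positive definite real matrices, let s₁,…,s_k ∈ ℝⁿ be nonzero and pairwise A-conjugate (sᵢᵀ A sⱼ = 0 for i ≠ j), let S = [s₁,…,s_k], Y = AS, and let W₀ be a symmetric matrix with W₀S = Y. For 0 ≤ i ≤ k let Aᵢ be the symmetric-Kronecker posterior mean computed from the first i actions: Aᵢ = A₀ + Δᵢ Uᵢᵀ + Uᵢ Δᵢᵀ − Uᵢ Sᵢᵀ Δᵢ Uᵢᵀ, where Sᵢ = [s₁,…,sᵢ], Yᵢ = ASᵢ, Δᵢ = Yᵢ − A₀Sᵢ, Uᵢ = W₀Sᵢ(Sᵢᵀ W₀ Sᵢ)⁻¹. Then for every i ∈ {0,…,k−1}, the matrix A_{i+1} is symmetric positive definite. -/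

import Mathlib

open Matrix

/-- Hereditary positive definiteness of the symmetric-Kronecker posterior means. -/
theorem stmt_2
    {n k : ℕ} (A A₀ : Matrix (Fin n) (Fin n) ℝ) (hA : A.PosDef) (hA₀ : A₀.PosDef)
    (s : Fin k → Fin n → ℝ) (hs : ∀ l, s l ≠ 0)
    (hconj : ∀ l m, l ≠ m → s l ⬝ᵥ A.mulVec (s m) = 0)
    (S : Matrix (Fin n) (Fin k) ℝ) (hSdef : ∀ (j : Fin n) (l : Fin k), S j l = s l j)
    (W₀ : Matrix (Fin n) (Fin n) ℝ) (hW₀ : W₀.IsSymm) (hW₀S : W₀ * S = A * S) :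
    ∀ (i : ℕ) (hi : i + 1 ≤ k) (Si : Matrix (Fin n) (Fin (i + 1)) ℝ),
      (∀ (j : Fin n) (l : Fin (i + 1)), Si j l = s (Fin.castLE hi l) j) →
      (A₀ + (A * Si - A₀ * Si) * (W₀ * Si * (Siᵀ * W₀ * Si)⁻¹)ᵀ
        + (W₀ * Si * (Siᵀ * W₀ * Si)⁻¹) * (A * Si - A₀ * Si)ᵀ
        - (W₀ * Si * (Siᵀ * W₀ * Si)⁻¹) * Siᵀ * (A * Si - A₀ * Si)
          * (W₀ * Si * (Siᵀ * W₀ * Si)⁻¹)ᵀ).PosDef := by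
  intro i hi Si hSi
  -- transposes of A and A₀
  have hAT : Aᵀ = A := by
    ext a b
    have := congrFun (congrFun hA.1 a) b
    simpa using this
  have hA₀T : A₀ᵀ = A₀ := by
    ext a b
    have := congrFun (congrFun hA₀.1 a) b
    simpa using this
  -- W₀ * Si = A * Si
  have hW₀Si : W₀ * Si = A * Si := by
    ext j l
    have h := congrFun (congrFun hW₀S j) (Fin.castLE hi l)
    simp only [mul_apply, hSdef] at h
    simp only [mul_apply, hSi]
    exact h
  have hG' : Siᵀ * W₀ * Si = Siᵀ * A * Si := by
    rw [Matrix.mul_assoc, hW₀Si, Matrix.mul_assoc]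
  rw [hW₀Si, hG']
  set G := Siᵀ * A * Si with hGdef
  -- G is diagonal with positive entries
  have hGentry : ∀ l m, G l m
      = s (Fin.castLE hi l) ⬝ᵥ A.mulVec (s (Fin.castLE hi m)) := by
    intro l m
    simp only [hGdef, mul_apply, transpose_apply, hSi, dotProduct, mulVec,
      Finset.sum_mul, Finset.mul_sum]
    rw [Finset.sum_comm]
    exact Finset.sum_congr rfl fun j _ => Finset.sum_congr rfl fun r _ => by ring
  set d : Fin (i+1) → ℝ := fun l => s (Fin.castLE hi l) ⬝ᵥ A.mulVec (s (Fin.castLE hi l))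
    with hddef
  have hd : ∀ l, 0 < d l := by
    intro l
    have := hA.dotProduct_mulVec_pos (hs (Fin.castLE hi l))
    simpa using this
  have hGdiag : G = Matrix.diagonal d := by
    ext l m
    by_cases h : l = m
    · subst h
      simp [hGentry, hddef]
    · rw [hGentry]
      rw [Matrix.diagonal_apply_ne _ h]
      exact hconj _ _ fun he => h (Fin.castLE_injective hi he)
  have hGT : Gᵀ = G := by rw [hGdiag, Matrix.diagonal_transpose]
  have hGunit : IsUnit G.det := by
    rw [hGdiag, Matrix.det_diagonal]
    exact (Finset.prod_pos fun l _ => hd l).ne'.isUnit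
  have hGGinv : G * G⁻¹ = 1 := Matrix.mul_nonsing_inv G hGunit
  have hGinvT : (G⁻¹)ᵀ = G⁻¹ := by rw [Matrix.transpose_nonsing_inv, hGT]
  -- the projector
  set P := Si * (G⁻¹ * Siᵀ) with hPdef
  have hPT : Pᵀ = P := by
    rw [hPdef, transpose_mul, transpose_mul, hGinvT, transpose_transpose,
      Matrix.mul_assoc]
  have hkey : Siᵀ * (A * (Si * (G⁻¹ * Siᵀ))) = Siᵀ := by
    have h1 : Siᵀ * (A * (Si * (G⁻¹ * Siᵀ))) = G * G⁻¹ * Siᵀ := by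
      rw [hGdef]; simp only [Matrix.mul_assoc]
    rw [h1, hGGinv, Matrix.one_mul]
  have hPAP : P * (A * P) = P := by
    calc P * (A * P) = Si * (G⁻¹ * (Siᵀ * (A * P))) := by
          rw [hPdef]; simp only [Matrix.mul_assoc]
      _ = Si * (G⁻¹ * Siᵀ) := by rw [hPdef, hkey]
      _ = P := hPdef.symm
  -- the key algebraic identity
  have ht : (A * Si * G⁻¹)ᵀ = G⁻¹ * (Siᵀ * A) := by
    rw [transpose_mul, transpose_mul, hGinvT, hAT]
  have ht2 : (A * Si - A₀ * Si)ᵀ = Siᵀ * A - Siᵀ * A₀ := by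
    rw [transpose_sub, transpose_mul, transpose_mul, hAT, hA₀T]
  have e1 : (A * Si - A₀ * Si) * (G⁻¹ * (Siᵀ * A)) = (A - A₀) * (P * A) := by
    rw [hPdef]
    simp only [Matrix.sub_mul, Matrix.mul_sub, Matrix.mul_assoc]
  have e2 : (A * Si * G⁻¹) * (Siᵀ * A - Siᵀ * A₀) = (A * P) * (A - A₀) := by
    rw [hPdef]
    simp only [Matrix.sub_mul, Matrix.mul_sub, Matrix.mul_assoc]
  have e3 : (A * Si * G⁻¹) * Siᵀ * (A * Si - A₀ * Si) * (G⁻¹ * (Siᵀ * A))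
      = (A * P) * (A - A₀) * (P * A) := by
    rw [hPdef]
    simp only [Matrix.sub_mul, Matrix.mul_sub, Matrix.mul_assoc]
  have h5 : A * P * (A * (P * A)) = A * P * A := by
    calc A * P * (A * (P * A)) = A * (P * (A * P)) * A := by noncomm_ring
      _ = A * P * A := by rw [hPAP]
  have hE : A₀ + (A * Si - A₀ * Si) * (A * Si * G⁻¹)ᵀ
        + (A * Si * G⁻¹) * (A * Si - A₀ * Si)ᵀ
        - (A * Si * G⁻¹) * Siᵀ * (A * Si - A₀ * Si) * (A * Si * G⁻¹)ᵀ
      = (1 - A * P) * A₀ * (1 - P * A) + A * P * A := by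
    rw [ht, ht2, e1, e2, e3]
    have expand : A₀ + (A - A₀) * (P * A) + (A * P) * (A - A₀)
          - (A * P) * (A - A₀) * (P * A)
          - ((1 - A * P) * A₀ * (1 - P * A) + A * P * A)
        = A * P * A - A * P * (A * (P * A)) := by
      noncomm_ring
    rw [h5] at expand
    simp only [sub_self] at expand
    exact sub_eq_zero.mp expand
  rw [hE]
  -- positivity
  have hT1 : (1 - P * A)ᵀ = 1 - A * P := by
    rw [transpose_sub, transpose_one, transpose_mul, hAT, hPT]
  have hT2 : (P * A)ᵀ = A * P := by rw [transpose_mul, hAT, hPT]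
  have hM : (1 - A * P) * A₀ * (1 - P * A) + A * P * A
      = (1 - P * A)ᵀ * A₀ * (1 - P * A) + (P * A)ᵀ * A * (P * A) := by
    rw [hT1, hT2]
    have h6 : A * P * A * (P * A) = A * P * A := by
      calc A * P * A * (P * A) = A * (P * (A * P)) * A := by noncomm_ring
        _ = A * P * A := by rw [hPAP]
    rw [h6]
  rw [hM]
  have quad : ∀ (B C : Matrix (Fin n) (Fin n) ℝ) (v : Fin n → ℝ),
      v ⬝ᵥ (Cᵀ * B * C) *ᵥ v = (C *ᵥ v) ⬝ᵥ B *ᵥ (C *ᵥ v) := by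
    intro B C v
    rw [← Matrix.mulVec_mulVec, ← Matrix.mulVec_mulVec, Matrix.dotProduct_mulVec,
      Matrix.vecMul_transpose]
  refine posDef_iff_dotProduct_mulVec.mpr ⟨?_, ?_⟩
  · -- Hermitian
    rw [Matrix.IsHermitian, Matrix.conjTranspose_eq_transpose_of_trivial]
    simp only [transpose_add, transpose_mul, transpose_sub, transpose_one,
      transpose_transpose, hAT, hA₀T, hPT]
    noncomm_ring
  · intro x hx
    have hstar : star x = x := by funext j; simp
    rw [hstar, add_mulVec, dotProduct_add, quad, quad]
    set y := (1 - P * A) *ᵥ x with hy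
    set z := (P * A) *ᵥ x with hz
    have hyz : y + z = x := by
      rw [hy, hz, Matrix.sub_mulVec, Matrix.one_mulVec]
      abel
    by_cases hy0 : y = 0
    · have hz0 : z = x := by rw [← hyz, hy0, zero_add]
      have h1 : y ⬝ᵥ A₀ *ᵥ y = 0 := by rw [hy0]; simp
      have h2 : 0 < z ⬝ᵥ A *ᵥ z := by
        have := hA.dotProduct_mulVec_pos (x := z) (by rw [hz0]; exact hx)
        simpa using this
      linarith
    · have h1 : 0 < y ⬝ᵥ A₀ *ᵥ y := by
        have := hA₀.dotProduct_mulVec_pos hy0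
        simpa using this
      have h2 : 0 ≤ z ⬝ᵥ A *ᵥ z := by
        have := hA.posSemidef.dotProduct_mulVec_nonneg z
        simpa using this
      linarith
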